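/- Let w ∈ ℝ³, U ∈ ℝ^{3×3}_{sym,0}, and let e, r, ē be real numbers with r > 0 and 0 ≤ e ≤ ē. If (3/2)λ_max[(w⊗w)/r − U] < e, then |w|² < 2 r ē; in particular |w| ≤ √(2 r̄ ē) whenever r ≤ r̄. -/

import Mathlib

open MeasureTheory Filter
noncomputable section

/-- Euclidean dot product. -/
def dot {n : ℕ} (a b : Fin n → ℝ) : ℝ := ∑ i, a i * b i

/-- Maximal eigenvalue of a matrix (supremum of its real eigenvalues). -/
def lambdaMax {n : ℕ} (M : Matrix (Fin n) (Fin n) ℝ) : ℝ :=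
  sSup {r : ℝ | ∃ v : Fin n → ℝ, v ≠ 0 ∧ M.mulVec v = r • v}

/-- Outer (tensor) product of vectors. -/
def outer {n : ℕ} (a b : Fin n → ℝ) : Matrix (Fin n) (Fin n) ℝ :=
  Matrix.of fun i j => a i * b j

section aux

open Matrix

variable {n : ℕ} {M : Matrix (Fin n) (Fin n) ℝ} (hM : M.IsHermitian)

lemma trace_eq_sum_ev : M.trace = ∑ i, hM.eigenvalues i := by
  conv_lhs => rw [hM.spectral_theorem]
  rw [Unitary.conjStarAlgAut_apply, Matrix.trace_mul_cycle]
  have : (star (hM.eigenvectorUnitary : Matrix (Fin n) (Fin n) ℝ)) *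
      (hM.eigenvectorUnitary : Matrix (Fin n) (Fin n) ℝ) = 1 := by
    simpa using (hM.eigenvectorUnitary).prop.1
  rw [this, Matrix.one_mul, Matrix.trace_diagonal]
  simp

lemma eigen_mem : ∀ i, hM.eigenvalues i ∈
    {t : ℝ | ∃ v : Fin n → ℝ, v ≠ 0 ∧ M.mulVec v = t • v} := fun i =>
  ⟨_, (WithLp.ofLp_eq_zero 2).ne.2 <| hM.eigenvectorBasis.orthonormal.ne_zero i, hM.mulVec_eigenvectorBasis i⟩

lemma spec_subset : {t : ℝ | ∃ v : Fin n → ℝ, v ≠ 0 ∧ M.mulVec v = t • v}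
    ⊆ Set.range hM.eigenvalues := by
  rintro t ⟨v, hv0, hv⟩
  by_contra hnt
  have hne : ∀ i, hM.eigenvalues i ≠ t := fun i h => hnt ⟨i, h⟩
  have key : ∀ i, (⇑(hM.eigenvectorBasis i) : Fin n → ℝ) ⬝ᵥ v = 0 := by
    intro i
    have h1 : (M.mulVec (⇑(hM.eigenvectorBasis i))) ⬝ᵥ v
        = hM.eigenvalues i * ((⇑(hM.eigenvectorBasis i) : Fin n → ℝ) ⬝ᵥ v) := by
      rw [hM.mulVec_eigenvectorBasis, smul_dotProduct]
      simp
    have h2 : (M.mulVec (⇑(hM.eigenvectorBasis i))) ⬝ᵥ v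
        = (⇑(hM.eigenvectorBasis i) : Fin n → ℝ) ⬝ᵥ (M.mulVec v) := by
      have hsym : Mᵀ = M := by
        rw [← Matrix.conjTranspose_eq_transpose_of_trivial]; exact hM
      rw [Matrix.dotProduct_mulVec, ← Matrix.mulVec_transpose, hsym]
    rw [hv] at h2
    have h3 : (⇑(hM.eigenvectorBasis i) : Fin n → ℝ) ⬝ᵥ (t • v)
        = t * ((⇑(hM.eigenvectorBasis i) : Fin n → ℝ) ⬝ᵥ v) := by
      rw [dotProduct_smul]; simp
    have h4 : (hM.eigenvalues i - t) * ((⇑(hM.eigenvectorBasis i) : Fin n → ℝ) ⬝ᵥ v) = 0 := by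
      rw [sub_mul, ← h1, h2, h3, sub_self]
    rcases mul_eq_zero.1 h4 with h | h
    · exact absurd (sub_eq_zero.1 h) (hne i)
    · exact h
  apply hv0
  have hv' : (WithLp.equiv 2 (Fin n → ℝ)).symm v = 0 := by
    have : hM.eigenvectorBasis.repr ((WithLp.equiv 2 (Fin n → ℝ)).symm v) = 0 := by
      ext i
      rw [OrthonormalBasis.repr_apply_apply]
      have := key i
      simpa [dotProduct, PiLp.inner_apply, RCLike.inner_apply, mul_comm] using this
    simpa using (map_eq_zero_iff _ hM.eigenvectorBasis.repr.injective).1 this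
  simpa using congrArg (WithLp.equiv 2 (Fin n → ℝ)) hv'

lemma ev_le_lambdaMax (i : Fin n) : hM.eigenvalues i ≤ lambdaMax M := by
  apply le_csSup
  · exact ((Set.finite_range hM.eigenvalues).bddAbove).mono (spec_subset hM)
  · exact eigen_mem hM i

end aux

/-- If `(3/2) λ_max[(w⊗w)/r − U] < e` with `U` symmetric traceless, `r > 0` and
`0 ≤ e ≤ ē`, then `|w|² < 2 r ē`; in particular `|w| ≤ √(2 r̄ ē)` whenever `r ≤ r̄`. -/
theorem subsolution_pointwise_bound
    (w : Fin 3 → ℝ) (U : Matrix (Fin 3) (Fin 3) ℝ)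
    (hUsymm : U.IsSymm) (hUtrace : U.trace = 0)
    (e r ebar : ℝ) (hr : 0 < r) (he0 : 0 ≤ e) (he : e ≤ ebar)
    (hsub : (3 / 2) * lambdaMax ((r⁻¹ • outer w w) - U) < e) :
    dot w w < 2 * r * ebar ∧
      ∀ rbar : ℝ, r ≤ rbar → Real.sqrt (dot w w) ≤ Real.sqrt (2 * rbar * ebar) := by
  set M : Matrix (Fin 3) (Fin 3) ℝ := (r⁻¹ • outer w w) - U with hMdef
  have hM : M.IsHermitian := by
    rw [Matrix.IsHermitian, Matrix.conjTranspose_eq_transpose_of_trivial]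
    ext i j
    simp only [hMdef, Matrix.transpose_apply, Matrix.sub_apply, Matrix.smul_apply, outer,
      Matrix.of_apply, smul_eq_mul]
    rw [mul_comm (w j) (w i)]
    have := congrFun (congrFun hUsymm i) j
    simp only [Matrix.transpose_apply] at this
    rw [this]
  have htr : M.trace = r⁻¹ * dot w w := by
    simp only [hMdef, Matrix.trace_sub, Matrix.trace_smul, hUtrace, sub_zero, smul_eq_mul]
    simp [Matrix.trace, Matrix.diag, outer, dot, Finset.mul_sum]
  have hsum : M.trace = ∑ i, hM.eigenvalues i := trace_eq_sum_ev hM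
  have hle : ∀ i, hM.eigenvalues i ≤ lambdaMax M := ev_le_lambdaMax hM
  have htr3 : M.trace ≤ 3 * lambdaMax M := by
    rw [hsum]
    calc ∑ i, hM.eigenvalues i ≤ ∑ _i : Fin 3, lambdaMax M :=
          Finset.sum_le_sum fun i _ => hle i
      _ = 3 * lambdaMax M := by simp
  have hlam : 3 * lambdaMax M < 2 * e := by linarith
  have hkey : dot w w < 2 * r * e := by
    have h1 : r⁻¹ * dot w w < 2 * e := lt_of_le_of_lt (htr ▸ htr3) hlam
    have := (mul_lt_mul_iff_right₀ hr).2 h1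
    rw [← mul_assoc, mul_inv_cancel₀ hr.ne', one_mul] at this
    linarith
  have hmain : dot w w < 2 * r * ebar := by nlinarith
  refine ⟨hmain, fun rbar hrbar => ?_⟩
  apply Real.sqrt_le_sqrt
  have hebar : 0 ≤ ebar := le_trans he0 he
  nlinarith
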